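/- Let H be a Hopf algebra containing commuting grouplike elements g₁, g₂ of order p² and skew-primitive elements x₁, x₂ with g_i x_j g_i^{-1} = q^{δ_{ij}} x_j, Δ(x₁) = x₁⊗g₁g₂^d + 1⊗x₁, Δ(x₂) = x₂⊗g₁^b g₂^{bd} + 1⊗x₂. Let T = Σ q^{λβ₁γ₂} 1_β ⊗ 1_γ over β,γ ∈ (Z/p²Z)², with 1_β the primitive idempotents of C[Z_{p²}²]. Then under the twisted coproduct Δ_T(z) = T Δ(z) T^{-1}, one has Δ_T(x₁) = x₁⊗g₁g₂^{λ+d} + 1⊗x₁ and Δ_T(x₂) = x₂⊗g₁^b g₂^{bd} + g₁^λ⊗x₂. -/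
import Mathlib


open scoped TensorProduct

theorem twist_aux
    (p : ℕ) [NeZero p]
    (q : ℂ) (hqN : q ^ (p ^ 2) = 1)
    (lam : ZMod (p ^ 2))
    (H : Type*) [Ring H] [Algebra ℂ H]
    (g₁ g₂ x : H)
    (e : ZMod (p ^ 2) × ZMod (p ^ 2) → H)
    (he_sum : ∑ β : ZMod (p ^ 2) × ZMod (p ^ 2), e β = 1)
    (he_orth : ∀ β γ, e β * e γ = if β = γ then e β else 0)
    (heg₁ : ∀ β, e β * g₁ = q ^ (β.1.val) • e β)
    (heg₂ : ∀ β, e β * g₂ = q ^ (β.2.val) • e β)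
    (s : ZMod (p ^ 2) × ZMod (p ^ 2))
    (hex : ∀ β, e β * x = x * e (β - s))
    (A C A' C' M : ZMod (p ^ 2))
    (hscal1 : ∀ β γ : ZMod (p ^ 2) × ZMod (p ^ 2),
      lam * (β + s).1 * γ.2 + (A * γ.1 + C * γ.2)
        = lam * β.1 * γ.2 + (A' * γ.1 + C' * γ.2))
    (hscal2 : ∀ β γ : ZMod (p ^ 2) × ZMod (p ^ 2),
      lam * β.1 * (γ + s).2 = lam * β.1 * γ.2 + M * β.1)
    (T : H ⊗[ℂ] H)
    (hT_def : T = ∑ β : ZMod (p ^ 2) × ZMod (p ^ 2),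
      ∑ γ : ZMod (p ^ 2) × ZMod (p ^ 2),
        q ^ ((lam * β.1 * γ.2).val) • (e β ⊗ₜ e γ)) :
    T * (x ⊗ₜ[ℂ] (g₁ ^ A.val * g₂ ^ C.val) + 1 ⊗ₜ x)
      = (x ⊗ₜ (g₁ ^ A'.val * g₂ ^ C'.val) + (g₁ ^ M.val) ⊗ₜ x) * T := by
  haveI : NeZero (p ^ 2) := ⟨pow_ne_zero 2 (NeZero.ne p)⟩
  have qmod : ∀ m : ℕ, q ^ m = q ^ (m % p ^ 2) := by
    intro m
    conv_lhs => rw [← Nat.mod_add_div m (p ^ 2)]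
    rw [pow_add, pow_mul, hqN, one_pow, mul_one]
  have hQadd : ∀ a c : ZMod (p ^ 2), q ^ ((a + c).val) = q ^ a.val * q ^ c.val := by
    intro a c
    rw [ZMod.val_add, ← qmod, pow_add]
  have hQmul : ∀ a c : ZMod (p ^ 2), q ^ ((a * c).val) = q ^ (a.val * c.val) := by
    intro a c
    rw [ZMod.val_mul, ← qmod]
  have hle₁ : ∀ (γ : ZMod (p ^ 2) × ZMod (p ^ 2)) (k : ℕ),
      e γ * g₁ ^ k = q ^ (k * γ.1.val) • e γ := by
    intro γ k
    induction k with
    | zero => simp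
    | succ n ih =>
      rw [pow_succ, ← mul_assoc, ih, smul_mul_assoc, heg₁, smul_smul, ← pow_add]
      congr 1
      ring
  have hle₂ : ∀ (γ : ZMod (p ^ 2) × ZMod (p ^ 2)) (k : ℕ),
      e γ * g₂ ^ k = q ^ (k * γ.2.val) • e γ := by
    intro γ k
    induction k with
    | zero => simp
    | succ n ih =>
      rw [pow_succ, ← mul_assoc, ih, smul_mul_assoc, heg₂, smul_smul, ← pow_add]
      congr 1
      ring
  have hcomb : ∀ (γ : ZMod (p ^ 2) × ZMod (p ^ 2)) (a c : ZMod (p ^ 2)),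
      e γ * (g₁ ^ a.val * g₂ ^ c.val) = q ^ ((a * γ.1 + c * γ.2).val) • e γ := by
    intro γ a c
    rw [← mul_assoc, hle₁, smul_mul_assoc, hle₂, smul_smul, hQadd, hQmul, hQmul]
  have hg₁l : ∀ γ : ZMod (p ^ 2) × ZMod (p ^ 2), g₁ * e γ = e γ * g₁ := by
    intro γ
    have h1 : g₁ = ∑ β : ZMod (p ^ 2) × ZMod (p ^ 2), q ^ β.1.val • e β := by
      conv_lhs => rw [← one_mul g₁, ← he_sum]
      rw [Finset.sum_mul]
      exact Finset.sum_congr rfl fun β _ => heg₁ β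
    conv_lhs => rw [h1]
    rw [Finset.sum_mul, heg₁]
    rw [Finset.sum_eq_single γ]
    · rw [smul_mul_assoc, he_orth, if_pos rfl]
    · intro c _ hc; rw [smul_mul_assoc, he_orth, if_neg hc, smul_zero]
    · intro h; exact absurd (Finset.mem_univ γ) h
  have hg₂l : ∀ γ : ZMod (p ^ 2) × ZMod (p ^ 2), g₂ * e γ = e γ * g₂ := by
    intro γ
    have h1 : g₂ = ∑ β : ZMod (p ^ 2) × ZMod (p ^ 2), q ^ β.2.val • e β := by
      conv_lhs => rw [← one_mul g₂, ← he_sum]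
      rw [Finset.sum_mul]
      exact Finset.sum_congr rfl fun β _ => heg₂ β
    conv_lhs => rw [h1]
    rw [Finset.sum_mul, heg₂]
    rw [Finset.sum_eq_single γ]
    · rw [smul_mul_assoc, he_orth, if_pos rfl]
    · intro c _ hc; rw [smul_mul_assoc, he_orth, if_neg hc, smul_zero]
    · intro h; exact absurd (Finset.mem_univ γ) h
  have com₁ : ∀ γ : ZMod (p ^ 2) × ZMod (p ^ 2), Commute (e γ) g₁ :=
    fun γ => (hg₁l γ).symm
  have com₂ : ∀ γ : ZMod (p ^ 2) × ZMod (p ^ 2), Commute (e γ) g₂ :=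
    fun γ => (hg₂l γ).symm
  have hgel : ∀ (γ : ZMod (p ^ 2) × ZMod (p ^ 2)) (a c : ZMod (p ^ 2)),
      (g₁ ^ a.val * g₂ ^ c.val) * e γ = q ^ ((a * γ.1 + c * γ.2).val) • e γ := by
    intro γ a c
    have h := ((com₁ γ).pow_right a.val).mul_right ((com₂ γ).pow_right c.val)
    rw [← h.eq, hcomb]
  have hMl : ∀ β : ZMod (p ^ 2) × ZMod (p ^ 2),
      g₁ ^ M.val * e β = q ^ ((M * β.1).val) • e β := by
    intro β
    rw [← ((com₁ β).pow_right M.val).eq, hle₁, hQmul]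
  have L1 : T * (x ⊗ₜ[ℂ] (g₁ ^ A.val * g₂ ^ C.val))
      = (x ⊗ₜ[ℂ] (g₁ ^ A'.val * g₂ ^ C'.val)) * T := by
    rw [hT_def]
    simp only [Finset.sum_mul, Finset.mul_sum, smul_mul_assoc, mul_smul_comm,
      Algebra.TensorProduct.tmul_mul_tmul, hex, hcomb, hgel, TensorProduct.tmul_smul,
      smul_smul, ← hQadd]
    refine Fintype.sum_equiv (Equiv.subRight s) _ _ ?_
    intro β
    refine Finset.sum_congr rfl fun γ _ => ?_
    have h := hscal1 (β - s) γ
    rw [sub_add_cancel] at h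
    simp only [Equiv.subRight_apply]
    rw [h]
  have L2 : T * ((1 : H) ⊗ₜ[ℂ] x) = ((g₁ ^ M.val) ⊗ₜ[ℂ] x) * T := by
    rw [hT_def]
    simp only [Finset.sum_mul, Finset.mul_sum, smul_mul_assoc, mul_smul_comm,
      Algebra.TensorProduct.tmul_mul_tmul, hex, hMl, one_mul, mul_one,
      TensorProduct.smul_tmul', smul_smul, ← hQadd]
    refine Finset.sum_congr rfl fun β _ => ?_
    refine Fintype.sum_equiv (Equiv.subRight s) _ _ ?_
    intro γ
    have h := hscal2 β (γ - s)
    rw [sub_add_cancel] at h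
    simp only [Equiv.subRight_apply]
    rw [h]
  rw [mul_add, add_mul, L1, L2]

/-- Twisting the coproduct by `T = Σ q^{λβ₁γ₂} 1_β ⊗ 1_γ`: in a Hopf algebra `H`
containing commuting grouplike elements `g₁, g₂` of order `p²` and
skew-primitive elements `x₁, x₂` with `g_i x_j g_i⁻¹ = q^{δ_{ij}} x_j`,
`Δ(x₁) = x₁⊗g₁g₂^d + 1⊗x₁`, `Δ(x₂) = x₂⊗g₁^b g₂^{bd} + 1⊗x₂`, the twisted
coproduct `Δ_T(z) = TΔ(z)T⁻¹` satisfies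
`Δ_T(x₁) = x₁⊗g₁g₂^{λ+d} + 1⊗x₁` and `Δ_T(x₂) = x₂⊗g₁^b g₂^{bd} + g₁^λ⊗x₂`. -/
theorem twisted_coproduct_formulas
    (p : ℕ) (hp : p.Prime) [NeZero p]
    (q : ℂ) (hq : IsPrimitiveRoot q (p ^ 2))
    (lam b d : ZMod (p ^ 2))
    (H : Type*) [Ring H] [HopfAlgebra ℂ H]
    (g₁ g₂ x₁ x₂ : H)
    -- `g₁, g₂` are commuting grouplike elements of order dividing `p²`
    (hgg : g₁ * g₂ = g₂ * g₁)
    (hg₁ : g₁ ^ (p ^ 2) = 1) (hg₂ : g₂ ^ (p ^ 2) = 1)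
    (hg₁grp : Coalgebra.comul (R := ℂ) g₁ = g₁ ⊗ₜ g₁)
    (hg₂grp : Coalgebra.comul (R := ℂ) g₂ = g₂ ⊗ₜ g₂)
    -- `g_i x_j g_i⁻¹ = q^{δ_{ij}} x_j`
    (h11 : g₁ * x₁ = q • (x₁ * g₁)) (h12 : g₁ * x₂ = x₂ * g₁)
    (h21 : g₂ * x₁ = x₁ * g₂) (h22 : g₂ * x₂ = q • (x₂ * g₂))
    -- skew-primitivity of `x₁, x₂`
    (hx₁ : Coalgebra.comul (R := ℂ) x₁
      = x₁ ⊗ₜ (g₁ * g₂ ^ d.val) + 1 ⊗ₜ x₁)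
    (hx₂ : Coalgebra.comul (R := ℂ) x₂
      = x₂ ⊗ₜ (g₁ ^ b.val * g₂ ^ (b * d).val) + 1 ⊗ₜ x₂)
    -- the primitive idempotents `1_β` of `ℂ[ℤ_{p²} × ℤ_{p²}] ⊂ H`
    (e : ZMod (p ^ 2) × ZMod (p ^ 2) → H)
    (he_sum : ∑ β : ZMod (p ^ 2) × ZMod (p ^ 2), e β = 1)
    (he_orth : ∀ β γ, e β * e γ = if β = γ then e β else 0)
    (heg₁ : ∀ β, e β * g₁ = q ^ (β.1.val) • e β)
    (heg₂ : ∀ β, e β * g₂ = q ^ (β.2.val) • e β)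
    (hex₁ : ∀ β, e β * x₁ = x₁ * e (β - (1, 0)))
    (hex₂ : ∀ β, e β * x₂ = x₂ * e (β - (0, 1)))
    -- the twist `T`
    (T : H ⊗[ℂ] H)
    (hT_def : T = ∑ β : ZMod (p ^ 2) × ZMod (p ^ 2),
      ∑ γ : ZMod (p ^ 2) × ZMod (p ^ 2),
        q ^ ((lam * β.1 * γ.2).val) • (e β ⊗ₜ e γ))
    (hT : IsUnit T) :
    T * Coalgebra.comul (R := ℂ) x₁ * (↑hT.unit⁻¹ : H ⊗[ℂ] H)
        = x₁ ⊗ₜ (g₁ * g₂ ^ (lam + d).val) + 1 ⊗ₜ x₁ ∧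
    T * Coalgebra.comul (R := ℂ) x₂ * (↑hT.unit⁻¹ : H ⊗[ℂ] H)
        = x₂ ⊗ₜ (g₁ ^ b.val * g₂ ^ (b * d).val) + (g₁ ^ lam.val) ⊗ₜ x₂ := by
  haveI : NeZero (p ^ 2) := ⟨pow_ne_zero 2 (NeZero.ne p)⟩
  haveI : Fact (1 < p ^ 2) := ⟨Nat.one_lt_pow two_ne_zero hp.one_lt⟩
  have hv1 : ((1 : ZMod (p ^ 2)).val) = 1 := ZMod.val_one _
  have hTinv : T * (↑hT.unit⁻¹ : H ⊗[ℂ] H) = 1 := hT.mul_val_inv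
  have hs11 : ∀ β γ : ZMod (p ^ 2) × ZMod (p ^ 2),
      lam * (β + (1, 0)).1 * γ.2 + (1 * γ.1 + d * γ.2)
        = lam * β.1 * γ.2 + (1 * γ.1 + (lam + d) * γ.2) := by
    intro β γ
    simp only [Prod.fst_add]
    ring
  have hs12 : ∀ β γ : ZMod (p ^ 2) × ZMod (p ^ 2),
      lam * β.1 * (γ + (1, 0)).2 = lam * β.1 * γ.2 + 0 * β.1 := by
    intro β γ
    simp only [Prod.snd_add]
    ring
  have hs21 : ∀ β γ : ZMod (p ^ 2) × ZMod (p ^ 2),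
      lam * (β + (0, 1)).1 * γ.2 + (b * γ.1 + b * d * γ.2)
        = lam * β.1 * γ.2 + (b * γ.1 + b * d * γ.2) := by
    intro β γ
    simp only [Prod.fst_add]
    ring
  have hs22 : ∀ β γ : ZMod (p ^ 2) × ZMod (p ^ 2),
      lam * β.1 * (γ + (0, 1)).2 = lam * β.1 * γ.2 + lam * β.1 := by
    intro β γ
    simp only [Prod.snd_add]
    ring
  have H1 := twist_aux p q hq.pow_eq_one lam H g₁ g₂ x₁ e he_sum he_orth heg₁ heg₂
    (1, 0) hex₁ 1 d 1 (lam + d) 0 hs11 hs12 T hT_def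
  have H2 := twist_aux p q hq.pow_eq_one lam H g₁ g₂ x₂ e he_sum he_orth heg₁ heg₂
    (0, 1) hex₂ b (b * d) b (b * d) lam hs21 hs22 T hT_def
  simp only [hv1, pow_one, ZMod.val_zero, pow_zero] at H1
  rw [← hx₁] at H1
  rw [← hx₂] at H2
  constructor
  · rw [H1, mul_assoc, hTinv, mul_one]
  · rw [H2, mul_assoc, hTinv, mul_one]
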